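/- arXiv:0708.3326 — 3 statements merged into one kernel-verified Lean document; each statement's English description precedes it below -/
import Mathlib

section
/- The polynomial C_m := B_m/λ(m) ∈ ℤ[T₁,T₂] is primitive, i.e. the gcd of its coefficients is 1. Equivalently, for m a power of a prime ℓ, the gcd of the binomial coefficients C(m,i)/ℓ for 0 < i < m together generates the unit ideal; and for m not a prime power, gcd of the C(m,i), 0 < i < m, is 1. -/
noncomputable section

variable {A : Type*} [CommRing A]

/-- Substitution of a family of (multivariate) power series into a multivariate power
series, defined coefficientwise via truncation.  It computes the honest substitution
whenever each `a s` has zero constant coefficient. -/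
def psubst {σ τ : Type*} [Fintype σ] [DecidableEq σ] (F : MvPowerSeries σ A)
    (a : σ → MvPowerSeries τ A) : MvPowerSeries τ A :=
  fun e => MvPowerSeries.coeff e
    (MvPolynomial.eval₂ (MvPowerSeries.C (σ := τ) (R := A)) a
      (MvPowerSeries.trunc A
        (Finsupp.equivFunOnFinite.symm fun _ => (e.sum fun _ k => k) + 1) F))

/-- `subst2 F f g` is `F(f, g)`. -/
def subst2 {τ : Type*} (F : MvPowerSeries (Fin 2) A) (f g : MvPowerSeries τ A) :
    MvPowerSeries τ A :=
  psubst F ![f, g]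

/-- `subst1 f G` is `f(G)`, substitution of a multivariate power series into a
one-variable power series. -/
def subst1 {τ : Type*} (f : PowerSeries A) (G : MvPowerSeries τ A) : MvPowerSeries τ A :=
  psubst f (fun _ => G)

/-- A (commutative, one-dimensional) formal group law over `A`. -/
structure IsFormalGroupLaw (F : MvPowerSeries (Fin 2) A) : Prop where
  id_left : subst2 F PowerSeries.X 0 = (PowerSeries.X : PowerSeries A)
  id_right : subst2 F 0 PowerSeries.X = (PowerSeries.X : PowerSeries A)
  assoc : subst2 F (subst2 F (MvPowerSeries.X 0) (MvPowerSeries.X 1))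
        (MvPowerSeries.X (2 : Fin 3))
      = subst2 F (MvPowerSeries.X 0) (subst2 F (MvPowerSeries.X 1) (MvPowerSeries.X 2))
  comm : subst2 F (MvPowerSeries.X 1) (MvPowerSeries.X (0 : Fin 2)) = F

/-- The `m`-series `[m]_F` of a formal group law: `[1]_F = T`, `[m+1]_F = F([m]_F, T)`. -/
def mulSeries (F : MvPowerSeries (Fin 2) A) : ℕ → PowerSeries A
  | 0 => 0
  | 1 => PowerSeries.X
  | (n+2) => subst2 F (mulSeries F (n+1)) PowerSeries.X

/-- The defect `∂f = f ∘ F − G ∘ (f × f)` measuring the failure of `f` to be a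
homomorphism of formal group laws `F → G`. -/
def fglDelta (F G : MvPowerSeries (Fin 2) A) (f : PowerSeries A) :
    MvPowerSeries (Fin 2) A :=
  subst1 f F - subst2 G (subst1 f (MvPowerSeries.X 0)) (subst1 f (MvPowerSeries.X 1))

/-- `f` is a homomorphism of formal group laws `F → G`. -/
def IsFGLHom (F G : MvPowerSeries (Fin 2) A) (f : PowerSeries A) : Prop :=
  PowerSeries.constantCoeff f = 0 ∧ fglDelta F G f = 0

/-- Lazard's polynomial `B_m = (T₁+T₂)^m − T₁^m − T₂^m`. -/
def Bpoly (A : Type*) [CommRing A] (m : ℕ) : MvPolynomial (Fin 2) A :=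
  (MvPolynomial.X 0 + MvPolynomial.X 1) ^ m - MvPolynomial.X 0 ^ m - MvPolynomial.X 1 ^ m

/-- `λ(m)`: the prime `ℓ` if `m` is a power of `ℓ`, and `1` otherwise. -/
def lambdaFun (m : ℕ) : ℕ := if IsPrimePow m then m.minFac else 1

/-- Lazard's polynomial `C_m = B_m / λ(m)`. -/
def Cpoly (A : Type*) [CommRing A] (m : ℕ) : MvPolynomial (Fin 2) A :=
  ∑ i ∈ Finset.Ioo 0 m, MvPolynomial.monomial
    (Finsupp.single 0 i + Finsupp.single 1 (m - i)) ((m.choose i / lambdaFun m : ℕ) : A)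

/-- The degree-`m` homogeneous part of a two-variable power series, as a polynomial. -/
def degPart (m : ℕ) (Φ : MvPowerSeries (Fin 2) A) : MvPolynomial (Fin 2) A :=
  ∑ i ∈ Finset.range (m + 1), MvPolynomial.monomial
    (Finsupp.single 0 i + Finsupp.single 1 (m - i))
    (MvPowerSeries.coeff (Finsupp.single 0 i + Finsupp.single 1 (m - i)) Φ)

/-- The symmetric 2-cocycle condition for a two-variable polynomial. -/
def IsSymmCocycle (P : MvPolynomial (Fin 2) A) : Prop :=
  MvPolynomial.rename (Equiv.swap (0 : Fin 2) 1) P = P ∧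
  MvPolynomial.aeval ![(MvPolynomial.X 1 : MvPolynomial (Fin 3) A), MvPolynomial.X 2] P
    - MvPolynomial.aeval ![(MvPolynomial.X 0 + MvPolynomial.X 1 : MvPolynomial (Fin 3) A),
        MvPolynomial.X 2] P
    + MvPolynomial.aeval ![(MvPolynomial.X 0 : MvPolynomial (Fin 3) A),
        MvPolynomial.X 1 + MvPolynomial.X 2] P
    - MvPolynomial.aeval ![(MvPolynomial.X 0 : MvPolynomial (Fin 3) A), MvPolynomial.X 1] P = 0

end



/-- Lucas/Kummer: `p` doesn't divide `choose m (p ^ v_p(m))`. -/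
lemma aux_kummer (p m : ℕ) (hp : p.Prime) (hm : m ≠ 0) :
    ¬ p ∣ m.choose (p ^ m.factorization p) := by
  set a := m.factorization p with ha
  have hmu : p ^ a * (m / p ^ a) = m := Nat.ordProj_mul_ordCompl_eq_self m p
  have hpu : ¬ p ∣ (m / p ^ a) := Nat.not_dvd_ordCompl hp hm
  have hu0 : m / p ^ a ≠ 0 := by intro h; rw [h, mul_zero] at hmu; exact hm hmu.symm
  obtain ⟨w, hw⟩ : ∃ w, m / p ^ a = w + 1 := ⟨m / p ^ a - 1, (Nat.succ_pred_eq_of_pos (Nat.pos_of_ne_zero hu0)).symm⟩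
  rw [hw] at hmu hpu
  have hsub : m - p ^ a = p ^ a * w := by rw [mul_add, mul_one] at hmu; omega
  have hkm : p ^ a ≤ m := Nat.le_of_dvd (Nat.pos_of_ne_zero hm) (Nat.ordProj_dvd m p)
  rw [← emultiplicity_eq_zero, hp.emultiplicity_choose hkm (Nat.lt_succ_self (Nat.log p m))]
  norm_cast
  rw [Finset.card_eq_zero, Finset.filter_eq_empty_iff]
  intro i hi
  simp only [not_le]
  rcases le_or_gt i a with h | h
  · rw [Nat.mod_eq_zero_of_dvd (pow_dvd_pow p h),
      Nat.mod_eq_zero_of_dvd (hsub ▸ Dvd.dvd.mul_right (pow_dvd_pow p h) w)]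
    exact Nat.pow_pos hp.pos
  · obtain ⟨j, hj, rfl⟩ : ∃ j, 1 ≤ j ∧ i = a + j := ⟨i - a, by omega, by omega⟩
    have hpi : p ^ (a + j) = p ^ a * p ^ j := pow_add p a j
    have h1 : p ^ a % p ^ (a + j) = p ^ a :=
      Nat.mod_eq_of_lt (Nat.pow_lt_pow_right hp.one_lt (by omega))
    have h2 : (m - p ^ a) % p ^ (a + j) = p ^ a * (w % p ^ j) := by
      rw [hsub, hpi, Nat.mul_mod_mul_left]
    rw [h1, h2, hpi]
    have hlt : w % p ^ j < p ^ j := Nat.mod_lt _ (Nat.pow_pos hp.pos)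
    have hne : w % p ^ j ≠ p ^ j - 1 := by
      intro hh
      apply hpu
      refine dvd_trans (dvd_pow_self p (by omega : j ≠ 0)) ⟨w / p ^ j + 1, ?_⟩
      have := Nat.div_add_mod w (p ^ j)
      have hpj : 1 ≤ p ^ j := Nat.one_le_pow _ _ hp.pos
      rw [mul_add, mul_one]
      omega
    calc p ^ a + p ^ a * (w % p ^ j) = p ^ a * (1 + w % p ^ j) := by ring
    _ < p ^ a * p ^ j := by
        have key : 1 + w % p ^ j < p ^ j := by
          generalize w % p ^ j = r at hlt hne; generalize p ^ j = q at hlt hne ⊢; omega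
        exact Nat.mul_lt_mul_of_le_of_lt le_rfl key (Nat.pow_pos hp.pos)


open MvPolynomial Finsupp in
lemma aux_coeff_B (m i : ℕ) (h1 : 0 < i) (h2 : i < m) :
    MvPolynomial.coeff (Finsupp.single 0 i + Finsupp.single 1 (m - i))
      ((MvPolynomial.X 0 + MvPolynomial.X 1) ^ m - MvPolynomial.X 0 ^ m - MvPolynomial.X 1 ^ m
        : MvPolynomial (Fin 2) ℤ) = (m.choose i : ℤ) := by
  classical
  set d : Fin 2 →₀ ℕ := Finsupp.single 0 i + Finsupp.single 1 (m - i) with hd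
  have hd0 : d 0 = i := by simp [hd, Finsupp.single_apply]
  have hd1 : d 1 = m - i := by simp [hd, Finsupp.single_apply]
  have hmain : MvPolynomial.coeff d ((X 0 + X 1 : MvPolynomial (Fin 2) ℤ) ^ m)
      = (m.choose i : ℤ) := by
    rw [add_pow, coeff_sum]
    have hterm : ∀ j, (X 0 ^ j * X 1 ^ (m - j) * ((m.choose j : ℕ) : MvPolynomial (Fin 2) ℤ))
        = monomial (Finsupp.single 0 j + Finsupp.single 1 (m - j)) ((m.choose j : ℕ) : ℤ) := by
      intro j
      rw [X_pow_eq_monomial, X_pow_eq_monomial, monomial_mul, ← C_eq_coe_nat, C_apply,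
        monomial_mul]
      simp
    rw [Finset.sum_congr rfl fun j _ => by rw [hterm j, coeff_monomial]]
    rw [Finset.sum_eq_single i]
    · rw [if_pos rfl]
    · intro j hj hji
      rw [if_neg]
      intro h
      apply hji
      have := DFunLike.congr_fun h 0
      simp [Finsupp.single_apply, hd0] at this
      omega
    · intro h
      exact absurd (Finset.mem_range.mpr (by omega)) h
  have hX0 : MvPolynomial.coeff d ((X 0 : MvPolynomial (Fin 2) ℤ) ^ m) = 0 := by
    rw [X_pow_eq_monomial, coeff_monomial, if_neg]
    intro h
    have := DFunLike.congr_fun h 1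
    simp [Finsupp.single_apply, hd1] at this
    omega
  have hX1 : MvPolynomial.coeff d ((X 1 : MvPolynomial (Fin 2) ℤ) ^ m) = 0 := by
    rw [X_pow_eq_monomial, coeff_monomial, if_neg]
    intro h
    have := DFunLike.congr_fun h 0
    simp [Finsupp.single_apply, hd0] at this
    omega
  rw [coeff_sub, coeff_sub, hmain, hX0, hX1]
  ring


theorem statement3 (m : ℕ) (hm : 2 ≤ m) (C : MvPolynomial (Fin 2) ℤ)
    (hC : (lambdaFun m : ℤ) • C = Bpoly ℤ m) :
    ∀ n : ℤ, (∀ d : Fin 2 →₀ ℕ, n ∣ MvPolynomial.coeff d C) → IsUnit n := by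
  intro n hn
  by_contra hu
  obtain ⟨p, hp, hpn⟩ := Int.exists_prime_and_dvd
    (fun h => hu (Int.isUnit_iff_natAbs_eq.mpr h))
  set q := p.natAbs with hqdef
  have hq : q.Prime := Int.prime_iff_natAbs_prime.mp hp
  have key : ∀ i, 0 < i → i < m → lambdaFun m * q ∣ m.choose i := by
    intro i hi1 hi2
    have hqd : (q : ℤ) ∣ MvPolynomial.coeff (Finsupp.single 0 i + Finsupp.single 1 (m - i)) C :=
      Int.natAbs_dvd.mpr (hpn.trans (hn _))
    have hcoeff : (lambdaFun m : ℤ) *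
        MvPolynomial.coeff (Finsupp.single 0 i + Finsupp.single 1 (m - i)) C
        = (m.choose i : ℤ) := by
      have h := congrArg
        (MvPolynomial.coeff (Finsupp.single 0 i + Finsupp.single 1 (m - i))) hC
      rwa [MvPolynomial.coeff_smul, zsmul_eq_mul, Bpoly, aux_coeff_B m i hi1 hi2] at h
    have hz : ((lambdaFun m * q : ℕ) : ℤ) ∣ (m.choose i : ℤ) := by
      push_cast
      rw [← hcoeff]
      exact mul_dvd_mul_left _ hqd
    exact_mod_cast hz
  by_cases hpp : IsPrimePow m
  · obtain ⟨ℓ, k, hℓ, hk, rfl⟩ := hpp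
    have hℓp : ℓ.Prime := hℓ.nat_prime
    have hlam : lambdaFun (ℓ ^ k) = ℓ := by
      rw [lambdaFun, if_pos ⟨ℓ, k, hℓ, hk, rfl⟩]
      exact hℓp.pow_minFac (by omega)
    have h1 := key 1 one_pos (by omega)
    rw [hlam, Nat.choose_one_right] at h1
    have hqℓ : q = ℓ := by
      have hkk : ℓ ^ k = ℓ * ℓ ^ (k - 1) := by
        rw [← pow_succ']
        congr 1
        omega
      rw [hkk] at h1
      have : q ∣ ℓ ^ (k - 1) := (mul_dvd_mul_iff_left hℓp.pos.ne').mp h1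
      exact (Nat.prime_dvd_prime_iff_eq hq hℓp).mp (hq.dvd_of_dvd_pow this)
    have h2 := key (ℓ ^ (k - 1)) (Nat.pow_pos hℓp.pos)
      (Nat.pow_lt_pow_right hℓp.one_lt (by omega))
    rw [hlam, hqℓ, ← sq] at h2
    have hle := pow_dvd_iff_le_emultiplicity.mp h2
    rw [hℓp.emultiplicity_choose_prime_pow
        (Nat.pow_le_pow_right hℓp.pos (by omega))
        (Nat.pow_pos hℓp.pos).ne',
      multiplicity_pow_self hℓp.pos.ne' hℓp.prime.not_isUnit] at hle
    have : (2 : ℕ) ≤ k - (k - 1) := by exact_mod_cast hle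
    omega
  · have hlam : lambdaFun m = 1 := if_neg hpp
    have hm0 : m ≠ 0 := by omega
    have ham : q ^ m.factorization q < m := by
      have hle : q ^ m.factorization q ≤ m :=
        Nat.le_of_dvd (by omega) (Nat.ordProj_dvd m q)
      rcases eq_or_lt_of_le hle with h | h
      · exfalso
        apply hpp
        refine ⟨q, m.factorization q, hq.prime, ?_, h⟩
        rcases Nat.eq_zero_or_pos (m.factorization q) with h0 | h0
        · rw [h0, pow_zero] at h; omega
        · exact h0
      · exact h
    have h := key (q ^ m.factorization q) (Nat.pow_pos hq.pos) ham
    rw [hlam, one_mul] at h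
    exact aux_kummer q m hq hm0 h
end

section
/- Let A be a commutative ring and let F, G be formal group laws over A with F ≡ G mod (T₁,T₂)^m and degree-m homogeneous difference equal to a·C_m for a ∈ A. Then for every k ≥ 1, the k-series satisfy [k]_F(T) ≡ [k]_G(T) + ((k^m − k)/λ(m))·a·T^m modulo (T)^{m+1}. -/
open Finset

section Helpers
variable {A : Type*} [CommRing A]

lemma coeff_fgf_zero {f g : PowerSeries A}
    (hf : PowerSeries.constantCoeff f = 0) (hg : PowerSeries.constantCoeff g = 0)
    {i j n : ℕ} (h : n < i + j) :
    PowerSeries.coeff n (f ^ i * g ^ j) = 0 := by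
  have h1 : (PowerSeries.X : PowerSeries A) ^ (i + j) ∣ f ^ i * g ^ j := by
    rw [pow_add]
    exact mul_dvd_mul (pow_dvd_pow_of_dvd (PowerSeries.X_dvd_iff.mpr hf) i)
      (pow_dvd_pow_of_dvd (PowerSeries.X_dvd_iff.mpr hg) j)
  exact PowerSeries.X_pow_dvd_iff.mp h1 n h

lemma sas0 (i j : ℕ) :
    (Finsupp.single (0 : Fin 2) i + Finsupp.single (1 : Fin 2) j : Fin 2 →₀ ℕ) 0 = i := by
  rw [Finsupp.add_apply, Finsupp.single_eq_same, Finsupp.single_eq_of_ne (by decide), add_zero]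

lemma sas1 (i j : ℕ) :
    (Finsupp.single (0 : Fin 2) i + Finsupp.single (1 : Fin 2) j : Fin 2 →₀ ℕ) 1 = j := by
  rw [Finsupp.add_apply, Finsupp.single_eq_same, Finsupp.single_eq_of_ne (by decide), zero_add]

lemma sas_eq (d : Fin 2 →₀ ℕ) :
    Finsupp.single (0 : Fin 2) (d 0) + Finsupp.single (1 : Fin 2) (d 1) = d := by
  ext x
  fin_cases x
  · exact sas0 _ _
  · exact sas1 _ _

lemma coeff_subst2' (F : MvPowerSeries (Fin 2) A)
    (f g : PowerSeries A) (hf : PowerSeries.constantCoeff f = 0)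
    (hg : PowerSeries.constantCoeff g = 0) (n : ℕ) :
    PowerSeries.coeff n (subst2 F f g)
      = ∑ p ∈ range (n+1) ×ˢ range (n+1),
          MvPowerSeries.coeff (Finsupp.single 0 p.1 + Finsupp.single 1 p.2) F
            * PowerSeries.coeff n (f ^ p.1 * g ^ p.2) := by
  classical
  set b : Fin 2 →₀ ℕ := Finsupp.equivFunOnFinite.symm fun _ => n + 1 with hb
  have hbi : ∀ i, b i = n + 1 := fun i => rfl
  have hsum : ((Finsupp.single () n).sum fun _ k => k) = n := by simp
  have h0 : PowerSeries.coeff n (subst2 F f g)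
      = MvPowerSeries.coeff (Finsupp.single () n)
          (MvPolynomial.eval₂ (MvPowerSeries.C (σ := Unit) (R := A)) ![f, g]
            (MvPowerSeries.trunc A b F)) := by
    show MvPowerSeries.coeff (Finsupp.single () n) (psubst F ![f, g]) = _
    rw [MvPowerSeries.coeff_apply (psubst F ![f, g])]
    unfold psubst
    show MvPowerSeries.coeff (Finsupp.single () n) (MvPolynomial.eval₂ (MvPowerSeries.C (σ := Unit) (R := A)) ![f, g] (MvPowerSeries.trunc A (Finsupp.equivFunOnFinite.symm fun _ => ((Finsupp.single () n).sum fun _ k => k) + 1) F)) = _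
    rw [hsum]
  rw [h0, MvPolynomial.eval₂_eq' (MvPowerSeries.C (σ := Unit) (R := A)) ![f, g], map_sum]
  simp only [MvPowerSeries.coeff_C_mul, Fin.prod_univ_two, Matrix.cons_val_zero,
    Matrix.cons_val_one, Matrix.head_cons]
  have hPS : ∀ (h : PowerSeries A), MvPowerSeries.coeff (Finsupp.single () n) h
      = PowerSeries.coeff n h := fun _ => rfl
  have hsub : (MvPowerSeries.trunc A b F).support ⊆ Finset.Iio b := by
    intro d hd
    rw [MvPolynomial.mem_support_iff] at hd
    rw [Finset.mem_Iio]
    by_contra hlt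
    rw [MvPowerSeries.coeff_trunc, if_neg hlt] at hd
    exact hd rfl
  rw [Finset.sum_subset hsub (by
    intro d _ hd
    rw [MvPolynomial.notMem_support_iff] at hd
    rw [hd, zero_mul])]
  rw [Finset.sum_congr rfl (fun d hd => by
    rw [MvPowerSeries.coeff_trunc, if_pos (Finset.mem_Iio.mp hd)])]
  rw [← Finset.sum_filter_of_ne (p := fun d => d 0 + d 1 ≤ n)
    (fun d _ hne => by
      by_contra hgt
      rw [hPS, coeff_fgf_zero hf hg (Nat.lt_of_not_le (by simpa using hgt)), mul_zero] at hne
      exact hne rfl)]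
  rw [← Finset.sum_filter_of_ne (s := range (n+1) ×ˢ range (n+1))
    (p := fun p => p.1 + p.2 ≤ n)
    (fun p _ hne => by
      by_contra hgt
      rw [coeff_fgf_zero hf hg (Nat.lt_of_not_le (by simpa using hgt)), mul_zero] at hne
      exact hne rfl)]
  refine Finset.sum_nbij' (fun d => (d 0, d 1))
    (fun p => Finsupp.single 0 p.1 + Finsupp.single 1 p.2) ?_ ?_ ?_ ?_ ?_
  · intro d hd
    rw [Finset.mem_filter] at hd
    simp only [Finset.mem_filter, Finset.mem_product, Finset.mem_range]
    exact ⟨⟨Nat.lt_succ_of_le (le_trans (Nat.le_add_right _ _) hd.2),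
      Nat.lt_succ_of_le (le_trans (Nat.le_add_left _ _) hd.2)⟩, hd.2⟩
  · intro p hp
    rw [Finset.mem_filter] at hp
    have hple : p.1 + p.2 ≤ n := by simpa using hp.2
    rw [Finset.mem_filter, Finset.mem_Iio]
    refine ⟨?_, by simpa [sas0, sas1] using hple⟩
    rw [lt_iff_le_and_ne]
    constructor
    · rw [Finsupp.le_def]
      intro i
      fin_cases i
      · simp only [Fin.zero_eta, Fin.isValue, sas0, hbi]; omega
      · simp only [Fin.mk_one, Fin.isValue, sas1, hbi]; omega
    · intro heq
      have := congrArg (fun v : Fin 2 →₀ ℕ => v 0) heq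
      simp only [sas0, hbi] at this
      omega
  · intro d hd
    exact sas_eq d
  · rintro ⟨p1, p2⟩ _
    simp only [sas0, sas1]
  · intro d hd
    rw [hPS, sas_eq d]

lemma fgl_coeff_n0 {F : MvPowerSeries (Fin 2) A} (hF : IsFormalGroupLaw F) (n : ℕ) :
    MvPowerSeries.coeff (Finsupp.single (0 : Fin 2) n + Finsupp.single 1 0) F
      = if n = 1 then 1 else 0 := by
  have h := congrArg (PowerSeries.coeff n) hF.id_left
  rw [coeff_subst2' F PowerSeries.X 0 (by simp) (by simp) n, PowerSeries.coeff_X] at h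
  rw [← h]
  rw [Finset.sum_eq_single (n, 0)]
  · simp
  · rintro ⟨p1, p2⟩ hmem hne
    rcases Nat.eq_zero_or_pos p2 with h2 | h2
    · subst h2
      have hp1 : n ≠ p1 := by
        intro h'; exact hne (by rw [h'])
      simp [PowerSeries.coeff_X_pow, hp1]
    · have : ((0 : PowerSeries A) ^ p2) = 0 := zero_pow (by omega)
      simp [this]
  · intro habs
    exact absurd (by simp [Finset.mem_product] : (n, 0) ∈ range (n+1) ×ˢ range (n+1)) habs

lemma fgl_coeff_0n {F : MvPowerSeries (Fin 2) A} (hF : IsFormalGroupLaw F) (n : ℕ) :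
    MvPowerSeries.coeff (Finsupp.single (0 : Fin 2) 0 + Finsupp.single 1 n) F
      = if n = 1 then 1 else 0 := by
  have h := congrArg (PowerSeries.coeff n) hF.id_right
  rw [coeff_subst2' F 0 PowerSeries.X (by simp) (by simp) n, PowerSeries.coeff_X] at h
  rw [← h]
  rw [Finset.sum_eq_single (0, n)]
  · simp
  · rintro ⟨p1, p2⟩ hmem hne
    rcases Nat.eq_zero_or_pos p1 with h1 | h1
    · subst h1
      have hp2 : n ≠ p2 := by
        intro h'; exact hne (by rw [h'])
      simp [PowerSeries.coeff_X_pow, hp2]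
    · have : ((0 : PowerSeries A) ^ p1) = 0 := zero_pow (by omega)
      simp [this]
  · intro habs
    exact absurd (by simp [Finset.mem_product] : ((0:ℕ), n) ∈ range (n+1) ×ˢ range (n+1)) habs

lemma constantCoeff_mulSeries {F : MvPowerSeries (Fin 2) A} (hF : IsFormalGroupLaw F) :
    ∀ k, PowerSeries.constantCoeff (mulSeries F k) = 0
  | 0 => by simp [mulSeries]
  | 1 => by simp [mulSeries]
  | (k+2) => by
    have hf := constantCoeff_mulSeries hF (k+1)
    show PowerSeries.constantCoeff (subst2 F (mulSeries F (k+1)) PowerSeries.X) = 0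
    rw [← PowerSeries.coeff_zero_eq_constantCoeff_apply,
      coeff_subst2' F _ _ hf (by simp) 0]
    rw [show Finset.range (0+1) ×ˢ Finset.range (0+1) = {((0:ℕ),(0:ℕ))} by decide,
      Finset.sum_singleton]
    have h00 := fgl_coeff_n0 hF 0
    simp only [if_neg (by omega : (0:ℕ) ≠ 1)] at h00
    have h00' : (MvPowerSeries.constantCoeff) F = 0 := by simpa using h00
    simp [h00']

lemma coeff_one_mulSeries {F : MvPowerSeries (Fin 2) A} (hF : IsFormalGroupLaw F) :
    ∀ k, PowerSeries.coeff 1 (mulSeries F k) = (k : A)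
  | 0 => by simp [mulSeries]
  | 1 => by simp [mulSeries]
  | (k+2) => by
    have hf := constantCoeff_mulSeries hF (k+1)
    have ih := coeff_one_mulSeries hF (k+1)
    show PowerSeries.coeff 1 (subst2 F (mulSeries F (k+1)) PowerSeries.X) = _
    rw [coeff_subst2' F _ _ hf (by simp) 1]
    rw [show Finset.range 2 ×ˢ Finset.range 2 = {(0,0),(0,1),(1,0),(1,1)} by decide]
    rw [Finset.sum_insert (by decide), Finset.sum_insert (by decide),
      Finset.sum_insert (by decide), Finset.sum_singleton]
    have h00 := fgl_coeff_n0 hF 0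
    rw [if_neg (by omega : (0:ℕ) ≠ 1)] at h00
    have h10 := fgl_coeff_n0 hF 1
    rw [if_pos rfl] at h10
    have h01 := fgl_coeff_0n hF 1
    rw [if_pos rfl] at h01
    rw [show (Finsupp.single (0:Fin 2) 0 : Fin 2 →₀ ℕ) = Finsupp.single (0:Fin 2) 0 from rfl]
    simp only [pow_zero, pow_one, one_mul, mul_one]
    rw [h00, h10]
    rw [show Finsupp.single (0:Fin 2) 0 + Finsupp.single 1 1
        = Finsupp.single (0:Fin 2) 0 + Finsupp.single 1 1 from rfl]
    rw [h01]
    have hc1 : PowerSeries.coeff 1 (mulSeries F (k+1) * PowerSeries.X)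
        = PowerSeries.constantCoeff (mulSeries F (k+1)) := by
      rw [show (1:ℕ) = 0 + 1 from rfl, PowerSeries.coeff_succ_mul_X]
      simp
    rw [hc1, hf]
    rw [ih]
    simp [PowerSeries.coeff_one_X]
    push_cast
    ring

lemma dvd_pow_sub_pow_of_dvd_sub {f g : PowerSeries A} {r : ℕ}
    (h : (PowerSeries.X : PowerSeries A) ^ r ∣ f - g) (i : ℕ) :
    (PowerSeries.X : PowerSeries A) ^ r ∣ f ^ i - g ^ i :=
  h.trans (sub_dvd_pow_sub_pow f g i)

lemma dvd_pow_sub_pow_succ {f g : PowerSeries A} {r : ℕ}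
    (h : (PowerSeries.X : PowerSeries A) ^ r ∣ f - g)
    (hf : PowerSeries.constantCoeff f = 0) (hg : PowerSeries.constantCoeff g = 0)
    {i : ℕ} (hi : 2 ≤ i) :
    (PowerSeries.X : PowerSeries A) ^ (r + 1) ∣ f ^ i - g ^ i := by
  rw [← geom_sum₂_mul f g i]
  rw [pow_succ']
  refine mul_dvd_mul ?_ h
  apply Finset.dvd_sum
  intro t ht
  rcases Nat.eq_zero_or_pos t with rfl | hp
  · simp only [pow_zero, one_mul]
    exact dvd_pow (PowerSeries.X_dvd_iff.mpr hg) (by rw [Finset.mem_range] at ht; omega)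
  · exact dvd_mul_of_dvd_left (dvd_pow (PowerSeries.X_dvd_iff.mpr hf) (by omega)) _

lemma coeff_pow_self {f : PowerSeries A} (hf : PowerSeries.constantCoeff f = 0) :
    ∀ i, PowerSeries.coeff i (f ^ i) = (PowerSeries.coeff 1 f) ^ i
  | 0 => by simp
  | (i+1) => by
    rw [pow_succ, PowerSeries.coeff_mul]
    rw [Finset.sum_eq_single (i, 1)]
    · rw [coeff_pow_self hf i, pow_succ]
    · rintro ⟨p, q⟩ hmem hne
      rw [Finset.HasAntidiagonal.mem_antidiagonal] at hmem
      simp only at hmem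
      rcases lt_trichotomy p i with hlt | rfl | hgt
      · have hdvd : (PowerSeries.X : PowerSeries A) ^ i ∣ f ^ i :=
          pow_dvd_pow_of_dvd (PowerSeries.X_dvd_iff.mpr hf) i
        rw [PowerSeries.X_pow_dvd_iff.mp hdvd p hlt, zero_mul]
      · exact absurd (by omega : q = 1) (fun hq => hne (by rw [hq]))
      · have hq : q = 0 := by omega
        subst hq
        rw [PowerSeries.coeff_zero_eq_constantCoeff_apply, hf, mul_zero]
    · intro habs
      exact absurd (Finset.HasAntidiagonal.mem_antidiagonal.mpr (by omega)) habs

lemma lambda_pos (m : ℕ) : 0 < lambdaFun m := by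
  unfold lambdaFun
  split_ifs
  exacts [Nat.minFac_pos _, one_pos]

lemma lambda_dvd_choose {m : ℕ} (i : ℕ) (hi : i ∈ Finset.Ioo 0 m) :
    lambdaFun m ∣ m.choose i := by
  unfold lambdaFun
  split_ifs with h
  · obtain ⟨p, t, hp, ht, rfl⟩ := h
    have hpp : p.Prime := Nat.prime_iff.mpr hp
    rw [Nat.pow_minFac (by omega), hpp.minFac_eq]
    rw [Finset.mem_Ioo] at hi
    exact Nat.Prime.dvd_choose_pow hpp hi.1.ne' hi.2.ne
  · simp

lemma lambda_dvd_pow_sub (m k : ℕ) : lambdaFun m ∣ k ^ m - k := by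
  unfold lambdaFun
  split_ifs with h
  · obtain ⟨p, t, hp, ht, rfl⟩ := h
    have hpp : p.Prime := Nat.prime_iff.mpr hp
    rw [Nat.pow_minFac (by omega), hpp.minFac_eq]
    haveI : Fact p.Prime := ⟨hpp⟩
    have hle : k ≤ k ^ p ^ t :=
      Nat.le_self_pow (pow_ne_zero t hpp.pos.ne') k
    have hfix : ∀ (s : ℕ) (x : ZMod p), x ^ p ^ s = x := by
      intro s x
      induction s with
      | zero => simp
      | succ s ih => rw [pow_succ, pow_mul, ih, ZMod.pow_card]
    have hz : ((k ^ p ^ t - k : ℕ) : ZMod p) = 0 := by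
      rw [Nat.cast_sub hle, Nat.cast_pow]
      rw [hfix, sub_self]
    exact (ZMod.natCast_eq_zero_iff _ _).mp hz
  · simp

lemma csucc (m k : ℕ) (hm : 2 ≤ m) :
    ((k + 1) ^ m - (k + 1)) / lambdaFun m
      = (k ^ m - k) / lambdaFun m
        + ∑ i ∈ Finset.Ioo 0 m, (m.choose i / lambdaFun m) * k ^ i := by
  have hL := lambda_pos m
  obtain ⟨u, hu⟩ := lambda_dvd_pow_sub m k
  have hSdvd : (∑ i ∈ Finset.Ioo 0 m, m.choose i * k ^ i)
      = lambdaFun m * ∑ i ∈ Finset.Ioo 0 m, (m.choose i / lambdaFun m) * k ^ i := by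
    rw [Finset.mul_sum]
    refine Finset.sum_congr rfl fun i hi => ?_
    rw [← mul_assoc, Nat.mul_div_cancel' (lambda_dvd_choose i hi)]
  have hbin : (k + 1) ^ m = 1 + (∑ i ∈ Finset.Ioo 0 m, m.choose i * k ^ i) + k ^ m := by
    have h1 := add_pow k 1 m
    simp only [one_pow, mul_one, Nat.cast_id] at h1
    rw [Finset.sum_range_succ] at h1
    have h2 : (∑ i ∈ Finset.range m, k ^ i * (m.choose i))
        = (∑ i ∈ (Finset.range m).erase 0, k ^ i * (m.choose i)) + k ^ 0 * (m.choose 0) := by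
      rw [Finset.sum_erase_add _ _ (Finset.mem_range.mpr (by omega))]
    rw [h2] at h1
    rw [Finset.range_eq_Ico, Finset.Ico_erase_left] at h1
    rw [h1, Nat.choose_self, Nat.choose_zero_right]
    have h3 : (∑ i ∈ Finset.Ioo 0 m, k ^ i * (m.choose i))
        = ∑ i ∈ Finset.Ioo 0 m, m.choose i * k ^ i :=
      Finset.sum_congr rfl fun i _ => mul_comm _ _
    rw [h3]
    ring
  have hge : k ≤ k ^ m := Nat.le_self_pow (by omega) k
  have hge2 : k + 1 ≤ (k + 1) ^ m := Nat.le_self_pow (by omega) (k + 1)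
  have key : (k + 1) ^ m - (k + 1)
      = (k ^ m - k) + (∑ i ∈ Finset.Ioo 0 m, m.choose i * k ^ i) := by omega
  rw [key, hu, hSdvd, ← Nat.mul_add, Nat.mul_div_cancel_left _ hL,
    Nat.mul_div_cancel_left _ hL]

lemma cpoly_coeff (m i : ℕ) :
    MvPolynomial.coeff (Finsupp.single (0 : Fin 2) i + Finsupp.single 1 (m - i)) (Cpoly A m)
      = if i ∈ Finset.Ioo 0 m then ((m.choose i / lambdaFun m : ℕ) : A) else 0 := by
  unfold Cpoly
  rw [MvPolynomial.coeff_sum]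
  split_ifs with h
  · rw [Finset.sum_eq_single i]
    · rw [MvPolynomial.coeff_monomial, if_pos rfl]
    · intro j hj hne
      rw [MvPolynomial.coeff_monomial, if_neg]
      intro heq
      apply hne
      have h2 := congrArg (fun v : Fin 2 →₀ ℕ => v 0) heq
      simpa [sas0] using h2
    · intro habs
      exact absurd h habs
  · apply Finset.sum_eq_zero
    intro j hj
    rw [MvPolynomial.coeff_monomial, if_neg]
    intro heq
    have := congrArg (fun v : Fin 2 →₀ ℕ => v 0) heq
    simp only [sas0] at this
    exact h (this ▸ hj)

lemma step {F G : MvPowerSeries (Fin 2) A} (hF : IsFormalGroupLaw F) (hG : IsFormalGroupLaw G)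
    {m : ℕ} (hm : 2 ≤ m) (a : A)
    (hlow : ∀ d : Fin 2 →₀ ℕ, d 0 + d 1 < m →
      MvPowerSeries.coeff d F = MvPowerSeries.coeff d G)
    (hdeg : ∀ d : Fin 2 →₀ ℕ, d 0 + d 1 = m →
      MvPowerSeries.coeff d F
        = MvPowerSeries.coeff d G + a * MvPolynomial.coeff d (Cpoly A m))
    {f f' : PowerSeries A} (hf0 : PowerSeries.constantCoeff f = 0)
    (hf'0 : PowerSeries.constantCoeff f' = 0)
    {c : A} (hcong : (PowerSeries.X : PowerSeries A) ^ (m + 1)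
      ∣ f - f' - PowerSeries.C c * PowerSeries.X ^ m)
    {k1 : A} (hk1 : PowerSeries.coeff 1 f' = k1) :
    (PowerSeries.X : PowerSeries A) ^ (m + 1)
      ∣ subst2 F f PowerSeries.X - subst2 G f' PowerSeries.X
        - PowerSeries.C
            (c + a * ∑ i ∈ Finset.Ioo 0 m, ((m.choose i / lambdaFun m : ℕ) : A) * k1 ^ i)
          * PowerSeries.X ^ m := by
  set c' : A := c + a * ∑ i ∈ Finset.Ioo 0 m, ((m.choose i / lambdaFun m : ℕ) : A) * k1 ^ i
    with hc'
  have hsub : (PowerSeries.X : PowerSeries A) ^ m ∣ f - f' := by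
    have h1 : (PowerSeries.X : PowerSeries A) ^ m ∣ f - f' - PowerSeries.C c * PowerSeries.X ^ m :=
      (pow_dvd_pow _ (by omega : m ≤ m + 1)).trans hcong
    have h2 : (PowerSeries.X : PowerSeries A) ^ m ∣ PowerSeries.C c * PowerSeries.X ^ m :=
      dvd_mul_left _ _
    simpa using dvd_add h1 h2
  have hcoefflow : ∀ j < m, PowerSeries.coeff j (f - f') = 0 :=
    fun j hj => PowerSeries.X_pow_dvd_iff.mp hsub j hj
  have hCn : ∀ (x : A) (n : ℕ),
      PowerSeries.coeff n (PowerSeries.C x * PowerSeries.X ^ m)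
        = if n = m then x else 0 := by
    intro x n
    rw [PowerSeries.coeff_C_mul, PowerSeries.coeff_X_pow]
    split_ifs <;> simp
  have hcm : PowerSeries.coeff m (f - f') = c := by
    have h0 := PowerSeries.X_pow_dvd_iff.mp hcong m (by omega)
    rw [map_sub, hCn c m, if_pos rfl, sub_eq_zero] at h0
    exact h0
  have hf1 : PowerSeries.coeff 1 f = k1 := by
    have h1 := hcoefflow 1 (by omega)
    rw [map_sub, sub_eq_zero] at h1
    rw [h1, hk1]
  rw [PowerSeries.X_pow_dvd_iff]
  intro j hj
  rw [map_sub, map_sub,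
    coeff_subst2' F f PowerSeries.X hf0 (by simp) j,
    coeff_subst2' G f' PowerSeries.X hf'0 (by simp) j,
    ← Finset.sum_sub_distrib, hCn c' j]
  rcases Nat.lt_or_ge j m with hjm | hjm
  · rw [if_neg (by omega), sub_zero]
    apply Finset.sum_eq_zero
    rintro ⟨i, jj⟩ hmem
    simp only
    rcases Nat.lt_or_ge j (i + jj) with hbig | hle
    · rw [coeff_fgf_zero hf0 (by simp) hbig, coeff_fgf_zero hf'0 (by simp) hbig,
        mul_zero, mul_zero, sub_zero]
    · rw [hlow _ (by rw [sas0, sas1]; omega), ← mul_sub, ← map_sub, ← sub_mul]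
      have hdv : (PowerSeries.X : PowerSeries A) ^ m ∣ (f ^ i - f' ^ i) * PowerSeries.X ^ jj :=
        dvd_mul_of_dvd_left (dvd_pow_sub_pow_of_dvd_sub hsub i) _
      rw [PowerSeries.X_pow_dvd_iff.mp hdv j hjm, mul_zero]
  · have hjeq : j = m := by omega
    subst hjeq
    rw [if_pos rfl, sub_eq_zero]
    have hXj0 : PowerSeries.constantCoeff (PowerSeries.X : PowerSeries A) = 0 := by simp
    have claim : ∀ p ∈ Finset.range (j + 1) ×ˢ Finset.range (j + 1),
        (MvPowerSeries.coeff (Finsupp.single 0 p.1 + Finsupp.single 1 p.2) F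
            * PowerSeries.coeff j (f ^ p.1 * PowerSeries.X ^ p.2)
          - MvPowerSeries.coeff (Finsupp.single 0 p.1 + Finsupp.single 1 p.2) G
            * PowerSeries.coeff j (f' ^ p.1 * PowerSeries.X ^ p.2))
        = (if p = (1, 0) then c else 0)
          + (if p.1 + p.2 = j then
              a * MvPolynomial.coeff (Finsupp.single 0 p.1 + Finsupp.single 1 (j - p.1))
                  (Cpoly A j) * k1 ^ p.1
            else 0) := by
      rintro ⟨i, jj⟩ hmem
      simp only [Finset.mem_product, Finset.mem_range] at hmem
      simp only
      rcases Nat.lt_or_ge j (i + jj) with hbig | hle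
      · rw [coeff_fgf_zero hf0 hXj0 hbig, coeff_fgf_zero hf'0 hXj0 hbig,
          mul_zero, mul_zero, sub_zero]
        rw [if_neg (by
          intro h
          rw [Prod.mk.injEq] at h
          omega), if_neg (by omega), add_zero]
      · have key : MvPowerSeries.coeff (Finsupp.single 0 i + Finsupp.single 1 jj) F
              * PowerSeries.coeff j (f ^ i * PowerSeries.X ^ jj)
            - MvPowerSeries.coeff (Finsupp.single 0 i + Finsupp.single 1 jj) G
              * PowerSeries.coeff j (f' ^ i * PowerSeries.X ^ jj)
            = MvPowerSeries.coeff (Finsupp.single 0 i + Finsupp.single 1 jj) G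
                * (PowerSeries.coeff j (f ^ i * PowerSeries.X ^ jj)
                  - PowerSeries.coeff j (f' ^ i * PowerSeries.X ^ jj))
              + (MvPowerSeries.coeff (Finsupp.single 0 i + Finsupp.single 1 jj) F
                  - MvPowerSeries.coeff (Finsupp.single 0 i + Finsupp.single 1 jj) G)
                * PowerSeries.coeff j (f ^ i * PowerSeries.X ^ jj) := by ring
        rw [key]
        congr 1
        · by_cases hp : ((i, jj) : ℕ × ℕ) = (1, 0)
          · rw [Prod.mk.injEq] at hp
            obtain ⟨rfl, rfl⟩ := hp
            rw [if_pos rfl]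
            have h10 := fgl_coeff_n0 hG 1
            rw [if_pos rfl] at h10
            rw [h10, one_mul, pow_one, pow_one, pow_zero, mul_one, mul_one, ← map_sub, hcm]
          · rw [if_neg hp]
            have hz : PowerSeries.coeff j (f ^ i * PowerSeries.X ^ jj)
                - PowerSeries.coeff j (f' ^ i * PowerSeries.X ^ jj) = 0 := by
              rw [← map_sub, ← sub_mul]
              rcases Nat.eq_zero_or_pos i with rfl | hi1
              · simp
              · rcases Nat.lt_or_ge i 2 with hi2 | hi2
                · have hieq : i = 1 := by omega
                  subst hieq
                  have hjj : 1 ≤ jj := by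
                    rcases Nat.eq_zero_or_pos jj with rfl | h
                    · exact absurd rfl hp
                    · exact h
                  have hdv : (PowerSeries.X : PowerSeries A) ^ (j + 1)
                      ∣ (f ^ 1 - f' ^ 1) * PowerSeries.X ^ jj := by
                    rw [pow_one, pow_one, pow_succ]
                    exact mul_dvd_mul hsub (dvd_pow_self _ (by omega))
                  rw [PowerSeries.X_pow_dvd_iff.mp hdv j (by omega)]
                · have hdv : (PowerSeries.X : PowerSeries A) ^ (j + 1)
                      ∣ (f ^ i - f' ^ i) * PowerSeries.X ^ jj :=
                    dvd_mul_of_dvd_left (dvd_pow_sub_pow_succ hsub hf0 hf'0 hi2) _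
                  rw [PowerSeries.X_pow_dvd_iff.mp hdv j (by omega)]
            rw [hz, mul_zero]
        · by_cases hm' : i + jj = j
          · rw [if_pos hm']
            have hjj : jj = j - i := by omega
            subst hjj
            have hd := hdeg (Finsupp.single 0 i + Finsupp.single 1 (j - i))
              (by rw [sas0, sas1]; omega)
            rw [hd, add_sub_cancel_left]
            have hcf : PowerSeries.coeff j (f ^ i * PowerSeries.X ^ (j - i)) = k1 ^ i := by
              have h := PowerSeries.coeff_mul_X_pow (f ^ i) (j - i) i
              rw [show i + (j - i) = j by omega] at h
              rw [h, coeff_pow_self hf0 i, hf1]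
            rw [hcf]
          · rw [if_neg hm']
            rw [hlow _ (by rw [sas0, sas1]; omega), sub_self, zero_mul]
    rw [Finset.sum_congr rfl claim, Finset.sum_add_distrib]
    congr 1
    · rw [Finset.sum_ite_eq' (Finset.range (j+1) ×ˢ Finset.range (j+1)) ((1,0) : ℕ × ℕ)]
      rw [if_pos (by simp [Finset.mem_product]; omega)]
    · rw [Finset.sum_product]
      have hinner : ∀ i ∈ Finset.range (j + 1),
          (∑ jj ∈ Finset.range (j + 1), if i + jj = j then
              a * MvPolynomial.coeff (Finsupp.single 0 i + Finsupp.single 1 (j - i))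
                (Cpoly A j) * k1 ^ i else 0)
            = a * MvPolynomial.coeff (Finsupp.single 0 i + Finsupp.single 1 (j - i))
                (Cpoly A j) * k1 ^ i := by
        intro i hi
        rw [Finset.mem_range] at hi
        rw [Finset.sum_eq_single (j - i)]
        · rw [if_pos (by omega)]
        · intro jj _ hne
          rw [if_neg (by omega)]
        · intro habs
          exact absurd (Finset.mem_range.mpr (by omega)) habs
      rw [Finset.sum_congr rfl hinner]
      have hterm : ∀ i ∈ Finset.range (j + 1),
          a * MvPolynomial.coeff (Finsupp.single 0 i + Finsupp.single 1 (j - i))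
              (Cpoly A j) * k1 ^ i
            = if i ∈ Finset.Ioo 0 j then
                a * (((j.choose i / lambdaFun j : ℕ) : A) * k1 ^ i) else 0 := by
        intro i _
        rw [cpoly_coeff]
        split_ifs with h
        · ring
        · rw [mul_zero, zero_mul]
      rw [Finset.sum_congr rfl hterm, ← Finset.sum_filter]
      rw [show (Finset.range (j+1)).filter (fun i => i ∈ Finset.Ioo 0 j) = Finset.Ioo 0 j by
        ext i
        simp only [Finset.mem_filter, Finset.mem_range, Finset.mem_Ioo]
        omega]
      rw [Finset.mul_sum]

lemma coeff_C_mul_X_pow' (x : A) (n r : ℕ) :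
    PowerSeries.coeff n (PowerSeries.C x * PowerSeries.X ^ r) = if n = r then x else 0 := by
  rw [PowerSeries.coeff_C_mul, PowerSeries.coeff_X_pow]
  split_ifs <;> simp

lemma main_dvd {F G : MvPowerSeries (Fin 2) A} (hF : IsFormalGroupLaw F)
    (hG : IsFormalGroupLaw G) {m : ℕ} (hm : 2 ≤ m) (a : A)
    (hlow : ∀ d : Fin 2 →₀ ℕ, d 0 + d 1 < m →
      MvPowerSeries.coeff d F = MvPowerSeries.coeff d G)
    (hdeg : ∀ d : Fin 2 →₀ ℕ, d 0 + d 1 = m →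
      MvPowerSeries.coeff d F
        = MvPowerSeries.coeff d G + a * MvPolynomial.coeff d (Cpoly A m)) :
    ∀ k, 1 ≤ k → (PowerSeries.X : PowerSeries A) ^ (m + 1)
      ∣ mulSeries F k - mulSeries G k
        - PowerSeries.C ((((k ^ m - k) / lambdaFun m : ℕ) : A) * a) * PowerSeries.X ^ m := by
  intro k hk
  induction k, hk using Nat.le_induction with
  | base =>
    show (PowerSeries.X : PowerSeries A) ^ (m + 1)
      ∣ PowerSeries.X - PowerSeries.X - _ * PowerSeries.X ^ m
    rw [one_pow, Nat.sub_self, Nat.zero_div, Nat.cast_zero, zero_mul, map_zero, zero_mul,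
      sub_self, sub_zero]
    exact dvd_zero _
  | succ k hk1 ih =>
    obtain ⟨k', rfl⟩ : ∃ k', k = k' + 1 := ⟨k - 1, by omega⟩
    have hstep := step hF hG hm a hlow hdeg (constantCoeff_mulSeries hF (k' + 1))
      (constantCoeff_mulSeries hG (k' + 1)) ih (coeff_one_mulSeries hG (k' + 1))
    have hF2 : mulSeries F (k' + 1 + 1) = subst2 F (mulSeries F (k' + 1)) PowerSeries.X := rfl
    have hG2 : mulSeries G (k' + 1 + 1) = subst2 G (mulSeries G (k' + 1)) PowerSeries.X := rfl
    have hconst : ((((k' + 1 + 1) ^ m - (k' + 1 + 1)) / lambdaFun m : ℕ) : A) * a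
        = (((k' + 1) ^ m - (k' + 1)) / lambdaFun m : ℕ) * a
          + a * ∑ i ∈ Finset.Ioo 0 m,
              ((m.choose i / lambdaFun m : ℕ) : A) * ((k' + 1 : ℕ) : A) ^ i := by
      have hnat := csucc m (k' + 1) hm
      rw [hnat]
      push_cast
      ring
    rw [hF2, hG2, hconst]
    exact hstep

end Helpers

theorem statement10 (A : Type*) [CommRing A] (F G : MvPowerSeries (Fin 2) A)
    (hF : IsFormalGroupLaw F) (hG : IsFormalGroupLaw G) (m : ℕ) (hm : 2 ≤ m) (a : A)
    (hlow : ∀ d : Fin 2 →₀ ℕ, d 0 + d 1 < m →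
      MvPowerSeries.coeff d F = MvPowerSeries.coeff d G)
    (hdeg : ∀ d : Fin 2 →₀ ℕ, d 0 + d 1 = m →
      MvPowerSeries.coeff d F
        = MvPowerSeries.coeff d G + a * MvPolynomial.coeff d (Cpoly A m))
    (k : ℕ) (hk : 1 ≤ k) :
    (∀ j < m, PowerSeries.coeff j (mulSeries F k) = PowerSeries.coeff j (mulSeries G k)) ∧
    PowerSeries.coeff m (mulSeries F k)
      = PowerSeries.coeff m (mulSeries G k) + (((k ^ m - k) / lambdaFun m : ℕ) : A) * a := by
  have hQ := main_dvd hF hG hm a hlow hdeg k hk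
  constructor
  · intro j hjm
    have h := PowerSeries.X_pow_dvd_iff.mp hQ j (by omega)
    rw [map_sub, map_sub, coeff_C_mul_X_pow', if_neg (by omega), sub_zero, sub_eq_zero] at h
    exact h
  · have h := PowerSeries.X_pow_dvd_iff.mp hQ m (by omega)
    rw [map_sub, map_sub, coeff_C_mul_X_pow', if_pos rfl] at h
    linear_combination h
end

section
/- Let A be a commutative ring, X = Spec B an affine scheme over S = Spec A equipped with an A-algebra augmentation σ^#: B → A splitting the structure map, with augmentation ideal I = ker(B → A) satisfying I^{n+1} = 0. Suppose I/I² is a free A-module of rank 1 and the natural maps (I/I²)^{⊗i} → I^i/I^{i+1} are isomorphisms for 1 ≤ i ≤ n. Then B is isomorphic as an augmented A-algebra to A[T]/(T)^{n+1}: for any t ∈ I lifting a generator of I/I², the A-algebra map A[T]/(T^{n+1}) → B sending T ↦ t is an isomorphism. -/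
open Polynomial

theorem statement13 {A B : Type*} [CommRing A] [CommRing B] [Algebra A B]
    (σ : B →ₐ[A] A) (n : ℕ) (I : Ideal B) (hI : I = RingHom.ker σ)
    (hnil : I ^ (n + 1) = ⊥) (t : B) (htI : t ∈ I) (ht0 : t ^ (n + 1) = 0)
    (hbasis : ∀ i, 1 ≤ i → i ≤ n →
      (∀ x ∈ I ^ i, ∃ a : A, x - algebraMap A B a * t ^ i ∈ I ^ (i + 1)) ∧
      (∀ a : A, algebraMap A B a * t ^ i ∈ I ^ (i + 1) → a = 0)) :
    Function.Bijective
      (AdjoinRoot.liftAlgHom (Polynomial.X ^ (n + 1) : Polynomial A) (Algebra.ofId A B) t (by simp [ht0])) := by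
  set f := AdjoinRoot.liftAlgHom (Polynomial.X ^ (n + 1) : Polynomial A) (Algebra.ofId A B) t (by simp [ht0]) with hf
  -- key vanishing lemma
  have key : ∀ (a : ℕ → A),
      (∑ j ∈ Finset.range (n+1), algebraMap A B (a j) * t ^ j) = 0 →
      ∀ i, i ≤ n → a i = 0 := by
    intro a hsum i
    induction i using Nat.strong_induction_on with
    | _ i ih =>
      intro hin
      have hmem : algebraMap A B (a i) * t ^ i ∈ I ^ (i+1) := by
        have hieq : algebraMap A B (a i) * t ^ i =
            - ∑ j ∈ (Finset.range (n+1)).erase i, algebraMap A B (a j) * t ^ j := by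
          have h := Finset.add_sum_erase (Finset.range (n+1))
            (fun j => algebraMap A B (a j) * t ^ j)
            (show i ∈ Finset.range (n+1) from Finset.mem_range.2 (by omega))
          rw [hsum] at h
          exact eq_neg_of_add_eq_zero_left h
        rw [hieq]
        refine neg_mem (Ideal.sum_mem _ ?_)
        intro j hj
        obtain ⟨hne, hjr⟩ := Finset.mem_erase.mp hj
        rcases Nat.lt_or_ge j i with hlt | hge
        · rw [ih j hlt (by omega)]
          simp
        · have hgt : i + 1 ≤ j := by omega
          exact Ideal.mul_mem_left _ _
            (Ideal.pow_le_pow_right hgt (Ideal.pow_mem_pow htI j))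
      rcases Nat.eq_zero_or_pos i with h0 | h1
      · subst h0
        have h1 : algebraMap A B (a 0) ∈ I := by
          simpa using hmem
        rw [hI, RingHom.mem_ker] at h1
        simpa using h1
      · exact (hbasis i h1 hin).2 _ hmem
  constructor
  · -- injective
    rw [injective_iff_map_eq_zero]
    intro x hx
    obtain ⟨p, rfl⟩ := AdjoinRoot.mk_surjective x
    rw [hf, AdjoinRoot.liftAlgHom_mk] at hx
    change aeval t p = 0 at hx
    rw [AdjoinRoot.mk_eq_zero]
    have hmonic : (X ^ (n+1) : A[X]).Monic := monic_X_pow _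
    rw [← Polynomial.modByMonic_eq_zero_iff_dvd hmonic]
    set r := p %ₘ (X ^ (n+1) : A[X]) with hr
    have hdeg : r.natDegree < n + 1 := by
      rcases eq_or_ne r 0 with h | h
      · simp [h]
      · have hnt : Nontrivial A := by
          rcases subsingleton_or_nontrivial A with hs | hs
          · exact absurd (Subsingleton.elim r 0) h
          · exact hs
        have := Polynomial.degree_modByMonic_lt p hmonic
        rw [← hr] at this
        have h2 : r.degree < ((n + 1 : ℕ) : WithBot ℕ) := by
          simpa [Polynomial.degree_X_pow] using this
        exact Polynomial.natDegree_lt_iff_degree_lt h |>.mpr h2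
    have haevalr : aeval t r = 0 := by
      have := Polynomial.modByMonic_add_div p (X ^ (n+1) : A[X])
      have h2 := congrArg (aeval t) this
      rw [map_add, map_mul] at h2
      simp only [map_pow, aeval_X, ht0, zero_mul, add_zero] at h2
      rw [← hr] at h2
      rw [h2, hx]
    have hcoeff : ∀ j, j ≤ n → r.coeff j = 0 := by
      apply key
      have := Polynomial.aeval_eq_sum_range' hdeg t
      rw [this] at haevalr
      rw [← haevalr]
      apply Finset.sum_congr rfl
      intro j _
      rw [Algebra.smul_def]
    ext j
    rcases Nat.lt_or_ge j (n+1) with hj | hj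
    · simpa using hcoeff j (by omega)
    · simp [Polynomial.coeff_eq_zero_of_natDegree_lt (lt_of_lt_of_le hdeg hj)]
  · -- surjective
    have htr : t ∈ f.range :=
      (AlgHom.mem_range f).mpr ⟨AdjoinRoot.root _, by rw [hf, AdjoinRoot.liftAlgHom_root]⟩
    have hrange : ∀ k i, n + 1 ≤ i + k → ∀ x ∈ I ^ i, x ∈ f.range := by
      intro k
      induction k with
      | zero =>
        intro i hik x hx
        have : x ∈ I ^ (n+1) := Ideal.pow_le_pow_right (by omega) hx
        rw [hnil] at this
        rw [Ideal.mem_bot] at this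
        rw [this]
        exact zero_mem _
      | succ k ihk =>
        intro i hik x hx
        rcases Nat.lt_or_ge (i + k) (n + 1) with hlt | hge
        · -- i + k + 1 = n + 1, i.e. i + k = n
          have hikn : i + k = n := by omega
          rcases Nat.eq_zero_or_pos i with h0 | h1
          · subst h0
            have hmem : x - algebraMap A B (σ x) ∈ I := by
              rw [hI, RingHom.mem_ker]
              simp
            have h2 : x - algebraMap A B (σ x) ∈ f.range :=
              ihk 1 (by omega) _ (by simpa using hmem)
            have h3 : algebraMap A B (σ x) ∈ f.range := Subalgebra.algebraMap_mem _ _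
            have := add_mem h2 h3
            simpa using this
          · obtain ⟨a, ha⟩ := (hbasis i h1 (by omega)).1 x hx
            have h2 : x - algebraMap A B a * t ^ i ∈ f.range :=
              ihk (i+1) (by omega) _ ha
            have h3 : algebraMap A B a * t ^ i ∈ f.range :=
              mul_mem (Subalgebra.algebraMap_mem _ _) (pow_mem htr i)
            have := add_mem h2 h3
            simpa using this
        · exact ihk i hge x hx
    intro x
    obtain ⟨y, hy⟩ := (AlgHom.mem_range f).mp (hrange (n+1) 0 (by omega) x (by simp))
    exact ⟨y, hy⟩
end
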